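/- For n ≥ 1, if there is an injection from A ⊕ (Fin n × C) to B ⊕ (Fin n × C), then there is an injection from A ⊕ C to B ⊕ C. -/

import Mathlib

open Cardinal

private lemma card_cancel_aux (n : ℕ) (hn : 1 ≤ n) (a b c : Cardinal)
    (h : a + (n : Cardinal) * c ≤ b + (n : Cardinal) * c) : a + c ≤ b + c := by
  rcases lt_or_ge c ℵ₀ with hC | hC
  · have hnC : (n : Cardinal) * c < ℵ₀ := mul_lt_aleph0 (nat_lt_aleph0 n) hC
    exact add_le_add_left ((add_le_add_iff_of_lt_aleph0 hnC).mp h) _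
  · have heq : (n : Cardinal) * c = c :=
      mul_eq_right hC ((nat_lt_aleph0 n).le.trans hC) (Nat.cast_ne_zero.mpr (by omega))
    rwa [heq] at h

theorem stmt_9 (n : ℕ) (hn : 1 ≤ n) (A B C : Type*)
    (f : A ⊕ (Fin n × C) → B ⊕ (Fin n × C)) (hf : Function.Injective f) :
    ∃ g : A ⊕ C → B ⊕ C, Function.Injective g := by
  have h0 := Cardinal.lift_mk_le'.mpr
    ⟨(⟨f, hf⟩ : (A ⊕ (Fin n × C)) ↪ (B ⊕ (Fin n × C)))⟩
  simp only [mk_sum, mk_prod, mk_fin, lift_add, lift_mul, lift_lift, lift_natCast] at h0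
  have hle : Nonempty ((A ⊕ C) ↪ (B ⊕ C)) := by
    rw [← Cardinal.lift_mk_le']
    simp only [mk_sum, lift_add, lift_lift]
    exact card_cancel_aux n hn _ _ _ h0
  obtain ⟨g⟩ := hle
  exact ⟨g, g.injective⟩
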